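/- Let M be an n×n matrix with entries in {0,1}, n ≥ 2, such that some column of M is the all-one vector. Then |det(M)| ≤ α_{n-1}, where α_{n-1} is the maximum of |det| over all (n-1)×(n-1) matrices with entries in {0,1}. -/

import Mathlib

/-- A square real matrix has all entries in {0,1}. -/
def IsZeroOne {k : ℕ} (M : Matrix (Fin k) (Fin k) ℝ) : Prop :=
  ∀ i j, M i j = 0 ∨ M i j = 1

/-- `alpha k` is the maximum of `|det M|` over k×k 0–1 matrices. -/
noncomputable def alpha (k : ℕ) : ℝ :=
  sSup {x : ℝ | ∃ M : Matrix (Fin k) (Fin k) ℝ, IsZeroOne M ∧ x = |M.det|}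

lemma abs_det_le_factorial {k : ℕ} (M : Matrix (Fin k) (Fin k) ℝ)
    (hM : IsZeroOne M) : |M.det| ≤ (Nat.factorial k : ℝ) := by
  rw [Matrix.det_apply]
  refine (Finset.abs_sum_le_sum_abs _ _).trans ?_
  have h1 : ∀ σ ∈ Finset.univ, |(Equiv.Perm.sign σ : ℤ) • ∏ i, M (σ i) i| ≤ (1 : ℝ) := by
    intro σ _
    rw [zsmul_eq_mul, abs_mul]
    have hs : |((Equiv.Perm.sign σ : ℤ) : ℝ)| = 1 := by
      rcases Int.units_eq_one_or (Equiv.Perm.sign σ) with h | h <;> simp [h]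
    rw [hs, one_mul, Finset.abs_prod]
    refine Finset.prod_le_one (fun i _ => abs_nonneg _) (fun i _ => ?_)
    rcases hM (σ i) i with h | h <;> simp [h]
  calc ∑ σ : Equiv.Perm (Fin k), |(Equiv.Perm.sign σ : ℤ) • ∏ i, M (σ i) i|
      ≤ ∑ _σ : Equiv.Perm (Fin k), (1 : ℝ) := Finset.sum_le_sum h1
    _ = (Nat.factorial k : ℝ) := by simp [Fintype.card_perm]

lemma bddAbove_alpha_set (k : ℕ) :
    BddAbove {x : ℝ | ∃ M : Matrix (Fin k) (Fin k) ℝ, IsZeroOne M ∧ x = |M.det|} := by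
  refine ⟨(Nat.factorial k : ℝ), fun x hx => ?_⟩
  obtain ⟨M, hM, rfl⟩ := hx
  exact abs_det_le_factorial M hM

theorem stmt_0 {n : ℕ} (hn : 2 ≤ n) (M : Matrix (Fin n) (Fin n) ℝ)
    (hM : IsZeroOne M) (j : Fin n) (hcol : ∀ i, M i j = 1) :
    |M.det| ≤ alpha (n - 1) := by
  obtain ⟨m, rfl⟩ : ∃ m, n = m + 1 := ⟨n - 1, by omega⟩
  simp only [Nat.add_sub_cancel]
  -- row reduce: subtract row 0 from all other rows
  set A : Matrix (Fin (m + 1)) (Fin (m + 1)) ℝ :=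
    fun i k => M i k + (if i = 0 then 0 else -1) * M 0 k with hA
  have hdetA : A.det = M.det := by
    refine Matrix.det_eq_of_forall_row_eq_smul_add_const
      (fun i => if i = 0 then 0 else -1) 0 (by simp) (fun i k => rfl)
  -- column j of A: 1 at row 0, 0 elsewhere
  have hAj : ∀ i, A i j = if i = 0 then 1 else 0 := by
    intro i
    by_cases h : i = 0 <;> simp [hA, h, hcol]
  -- cofactor expansion along column j
  have hexp : A.det = (-1) ^ ((0 : Fin (m+1)) + j : ℕ) *
      (A.submatrix (Fin.succAbove 0) j.succAbove).det := by
    rw [Matrix.det_succ_column A j]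
    rw [Finset.sum_eq_single 0]
    · rw [hAj 0]; simp
    · intro i _ hi
      rw [hAj i]; simp [hi]
    · simp
  set B := A.submatrix (Fin.succAbove 0) j.succAbove with hB
  have habs : |M.det| = |B.det| := by
    rw [← hdetA, hexp, abs_mul, abs_pow, abs_neg, abs_one, one_pow, one_mul]
  -- column rescaling: C = B * diagonal ε with ε q = ±1
  set ε : Fin m → ℝ := fun q => 1 - 2 * M 0 (j.succAbove q) with hε
  have hεpm : ∀ q, ε q = 1 ∨ ε q = -1 := by
    intro q
    rcases hM 0 (j.succAbove q) with h | h
    · left; simp [hε, h]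
    · right; simp [hε, h]; ring
  set C : Matrix (Fin m) (Fin m) ℝ := B * Matrix.diagonal ε with hC
  have hC01 : IsZeroOne C := by
    intro p q
    have hCpq : C p q = B p q * ε q := by
      simp [hC, Matrix.mul_apply, Matrix.diagonal]
    have hBpq : B p q = M (p.succ) (j.succAbove q)
        - M 0 (j.succAbove q) := by
      have h0 : (p.succ : Fin (m+1)) ≠ 0 := Fin.succ_ne_zero p
      simp [hB, hA, Matrix.submatrix, Fin.zero_succAbove, h0, sub_eq_add_neg]
    rw [hCpq, hBpq]
    rcases hM 0 (j.succAbove q) with h | h <;>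
      rcases hM (p.succ) (j.succAbove q) with h2 | h2 <;>
      simp [hε, h, h2] <;> norm_num
  have hdetC : |C.det| = |B.det| := by
    rw [hC, Matrix.det_mul, Matrix.det_diagonal, abs_mul, Finset.abs_prod]
    have : ∀ q ∈ Finset.univ, |ε q| = (1:ℝ) := by
      intro q _; rcases hεpm q with h | h <;> simp [h]
    rw [Finset.prod_congr rfl this]
    simp
  rw [habs, ← hdetC]
  exact le_csSup (bddAbove_alpha_set m) ⟨C, hC01, rfl⟩
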